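/- Let S be a measurable space, let r : S × S → ℝ be measurable with 0 ≤ r(s,ξ) ≤ B for all s, ξ, let P′ᵢ and Pⱼ be probability measures on S, and set c(s) = ∫ r(s,ξ) dPⱼ(ξ) and Z = ∫ exp(−c(s)) dP′ᵢ(s). Then the Bayesian posterior P* defined as the measure with density s ↦ exp(−c(s))/Z with respect to P′ᵢ is a probability measure, and for every probability measure P on S one has E_{P*,Pⱼ}[r] + D(P*‖P′ᵢ) ≤ E_{P,Pⱼ}[r] + D(P‖P′ᵢ); i.e., the Bayesian posterior is a global minimizer over all probability measures P of the objective E_{P,Pⱼ}[r] + D(P‖P′ᵢ). -/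

import Mathlib

open MeasureTheory Real

/- Kullback–Leibler divergence `D(P‖Q)`: the integral of the log-likelihood ratio `llr P Q`
with respect to `P`, with value `+∞` when `P` is not absolutely continuous with respect to
`Q` (or when the log-likelihood ratio is not integrable). -/
open Classical in
noncomputable def KL {S : Type*} [MeasurableSpace S] (P Q : Measure S) : EReal :=
  if P ≪ Q ∧ Integrable (llr P Q) P then ((∫ x, llr P Q x ∂P : ℝ) : EReal) else ⊤

/- Expected collision risk `E_{P,Q}[r] = ∫∫ r(s,ξ) dQ(ξ) dP(s)`. -/
noncomputable def expRisk {S : Type*} [MeasurableSpace S] (r : S → S → ℝ)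
    (P Q : Measure S) : ℝ :=
  ∫ s, ∫ ξ, r s ξ ∂Q ∂P

/- Gibbs posterior: the measure with density `s ↦ exp (-c s) / Z` with respect to `Q`,
where `Z = ∫ exp (-c t) dQ(t)`. -/
noncomputable def gibbs {S : Type*} [MeasurableSpace S] (Q : Measure S) (c : S → ℝ) :
    Measure S :=
  Q.withDensity fun s => ENNReal.ofReal (Real.exp (-c s) / ∫ t, Real.exp (-c t) ∂Q)

open scoped ENNReal

lemma my_integral_llr_nonneg {S : Type*} [MeasurableSpace S] {P Q : Measure S}
    [IsProbabilityMeasure P] [IsProbabilityMeasure Q] (hPQ : P ≪ Q)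
    (hint : Integrable (llr P Q) P) : 0 ≤ ∫ x, llr P Q x ∂P := by
  set f := fun x => (P.rnDeriv Q x).toReal with hf_def
  have hmeas : Measurable f := (Measure.measurable_rnDeriv P Q).ennreal_toReal
  have hnn : ∀ x, 0 ≤ (f x)⁻¹ := fun x => inv_nonneg.2 ENNReal.toReal_nonneg
  have hl : ∫⁻ x, ENNReal.ofReal ((f x)⁻¹) ∂P ≤ 1 := by
    conv_lhs => rw [← Measure.withDensity_rnDeriv_eq P Q hPQ]
    rw [lintegral_withDensity_eq_lintegral_mul _ (Measure.measurable_rnDeriv P Q)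
      (g := fun x => ENNReal.ofReal ((f x)⁻¹)) hmeas.inv.ennreal_ofReal]
    calc ∫⁻ x, (P.rnDeriv Q x * ENNReal.ofReal ((f x)⁻¹)) ∂Q
        ≤ ∫⁻ _, 1 ∂Q := by
          refine lintegral_mono_ae ?_
          filter_upwards [Measure.rnDeriv_lt_top P Q] with x hx
          rcases eq_or_ne (P.rnDeriv Q x) 0 with h0 | h0
          · simp [h0]
          · have : ENNReal.ofReal ((f x)⁻¹) = (P.rnDeriv Q x)⁻¹ := by
              rw [hf_def, ← ENNReal.toReal_inv, ENNReal.ofReal_toReal]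
              simp [h0]
            rw [this, ENNReal.mul_inv_cancel h0 hx.ne]
      _ = 1 := by simp
  have hint_inv : Integrable (fun x => (f x)⁻¹) P := by
    refine ⟨hmeas.inv.aestronglyMeasurable, ?_⟩
    rw [hasFiniteIntegral_iff_ofReal (ae_of_all _ hnn)]
    exact lt_of_le_of_lt hl ENNReal.one_lt_top
  have h_int_le : ∫ x, (f x)⁻¹ ∂P ≤ 1 := by
    rw [integral_eq_lintegral_of_nonneg_ae (ae_of_all _ hnn) hmeas.inv.aestronglyMeasurable]
    calc (∫⁻ x, ENNReal.ofReal ((f x)⁻¹) ∂P).toReal ≤ (1 : ℝ≥0∞).toReal :=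
          ENNReal.toReal_mono (by simp) hl
      _ = 1 := by simp
  have hpt : ∀ᵐ x ∂P, -llr P Q x ≤ (f x)⁻¹ - 1 := by
    filter_upwards [Measure.rnDeriv_pos hPQ, hPQ.ae_le (Measure.rnDeriv_lt_top P Q)]
      with x hx hx'
    have hfx : 0 < f x := ENNReal.toReal_pos hx.ne' hx'.ne
    have h := Real.log_le_sub_one_of_pos (inv_pos.2 hfx)
    rw [Real.log_inv] at h
    simpa [llr] using h
  have hle : ∫ x, -llr P Q x ∂P ≤ ∫ x, ((f x)⁻¹ - 1) ∂P :=
    integral_mono_ae hint.neg (hint_inv.sub (integrable_const 1)) hpt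
  rw [integral_neg, integral_sub hint_inv (integrable_const 1)] at hle
  simp only [integral_const, measure_univ, probReal_univ, ENNReal.toReal_one, smul_eq_mul, one_mul] at hle
  linarith

/-- The two-agent Bayesian posterior, i.e. the measure with density
`s ↦ exp (-c s) / Z` with respect to the nominal strategy `P'i`, where
`c s = ∫ r(s,ξ) dPⱼ(ξ)` and `Z = ∫ exp (-c s) dP'i(s)`, is a probability measure and is a
global minimizer over all probability measures `P` of `E_{P,Pⱼ}[r] + D(P‖P'i)`. -/
theorem bayesian_posterior_is_prob_and_global_minimizer
    {S : Type*} [MeasurableSpace S] (B : ℝ) (r : S → S → ℝ)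
    (hr : Measurable (Function.uncurry r))
    (hr0 : ∀ s ξ, 0 ≤ r s ξ) (hrB : ∀ s ξ, r s ξ ≤ B)
    (P'i Pj : Measure S) [IsProbabilityMeasure P'i] [IsProbabilityMeasure Pj] :
    let Pstar : Measure S := gibbs P'i fun s => ∫ ξ, r s ξ ∂Pj
    IsProbabilityMeasure Pstar ∧
      ∀ P : Measure S, IsProbabilityMeasure P →
        (expRisk r Pstar Pj : EReal) + KL Pstar P'i
          ≤ (expRisk r P Pj : EReal) + KL P P'i := by
  intro Pstar
  set c : S → ℝ := fun s => ∫ ξ, r s ξ ∂Pj with hc_def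
  -- basic facts about c
  have hc_meas : Measurable c := by
    have : StronglyMeasurable (Function.uncurry r) := hr.stronglyMeasurable
    exact this.integral_prod_right'.measurable
  have hc_nonneg : ∀ s, 0 ≤ c s := fun s => integral_nonneg (hr0 s)
  have hc_le : ∀ s, c s ≤ B := by
    intro s
    have hint : Integrable (fun ξ => r s ξ) Pj := by
      refine Integrable.mono' (integrable_const B) (hr.of_uncurry_left.aestronglyMeasurable) ?_
      exact ae_of_all _ fun ξ => by rw [Real.norm_eq_abs, abs_of_nonneg (hr0 s ξ)]; exact hrB s ξ
    calc c s ≤ ∫ _, B ∂Pj := integral_mono hint (integrable_const B) (hrB s)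
      _ = B := by simp
  have hc_int : ∀ (μ : Measure S), IsProbabilityMeasure μ → Integrable c μ := by
    intro μ hμ
    refine Integrable.mono' (integrable_const B) hc_meas.aestronglyMeasurable ?_
    exact ae_of_all _ fun s => by
      rw [Real.norm_eq_abs, abs_of_nonneg (hc_nonneg s)]; exact hc_le s
  -- Pstar is the tilted measure
  have hPstar_eq : Pstar = P'i.tilted (fun s => -c s) := rfl
  have hexp_int : Integrable (fun s => Real.exp (-c s)) P'i := by
    refine Integrable.mono' (integrable_const 1) ?_ ?_
    · exact (hc_meas.neg.exp).aestronglyMeasurable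
    · exact ae_of_all _ fun s => by
        rw [Real.norm_eq_abs, abs_of_pos (Real.exp_pos _)]
        exact Real.exp_le_one_iff.2 (neg_nonpos.2 (hc_nonneg s))
  have hZ_pos : 0 < ∫ s, Real.exp (-c s) ∂P'i := integral_exp_pos hexp_int
  set Z : ℝ := ∫ s, Real.exp (-c s) ∂P'i with hZ_def
  have hprob : IsProbabilityMeasure Pstar := by
    rw [hPstar_eq]; exact isProbabilityMeasure_tilted hexp_int
  refine ⟨hprob, ?_⟩
  have hPstar_ac : Pstar ≪ P'i := hPstar_eq ▸ tilted_absolutelyContinuous P'i _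
  have hc_int_star : Integrable c Pstar := hc_int Pstar hprob
  -- llr of Pstar
  have hllr_star : llr Pstar P'i =ᵐ[Pstar] fun x => -c x - Real.log Z := by
    refine hPstar_ac.ae_le ?_
    have := log_rnDeriv_tilted_left_self (μ := P'i) (f := fun s => -c s) hexp_int
    rw [hPstar_eq]
    exact this
  have hllr_star_int : Integrable (llr Pstar P'i) Pstar :=
    (Integrable.congr (hc_int_star.neg.sub (integrable_const (Real.log Z))) hllr_star.symm)
  have hKL_star : KL Pstar P'i = ((- ∫ x, c x ∂Pstar - Real.log Z : ℝ) : EReal) := by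
    rw [KL, if_pos ⟨hPstar_ac, hllr_star_int⟩]
    congr 1
    have h1 : Integrable (fun x => -c x) Pstar := hc_int_star.neg
    rw [integral_congr_ae hllr_star, integral_sub h1 (integrable_const _),
      integral_neg, integral_const]
    simp
  have hrisk_star : expRisk r Pstar Pj = ∫ x, c x ∂Pstar := rfl
  intro P hP
  by_cases hPc : P ≪ P'i ∧ Integrable (llr P P'i) P
  · obtain ⟨hPac, hPint⟩ := hPc
    have hrisk_P : expRisk r P Pj = ∫ x, c x ∂P := rfl
    have hKL_P : KL P P'i = ((∫ x, llr P P'i x ∂P : ℝ) : EReal) := by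
      rw [KL, if_pos ⟨hPac, hPint⟩]
    -- nonnegativity of KL(P ‖ Pstar)
    have hP_ac_star : P ≪ Pstar := by
      rw [hPstar_eq]
      exact hPac.trans (absolutelyContinuous_tilted hexp_int)
    have hcP : Integrable (fun s => -c s) P := (hc_int P hP).neg
    have hllrPstar_int : Integrable (llr P Pstar) P := by
      rw [hPstar_eq]
      exact integrable_llr_tilted_right hPac hcP hPint hexp_int
    have hkey : ∫ x, llr P Pstar x ∂P
        = ∫ x, llr P P'i x ∂P - ∫ x, -c x ∂P + Real.log Z := by
      rw [hPstar_eq]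
      exact integral_llr_tilted_right hPac hcP hexp_int hPint
    have hnn : 0 ≤ ∫ x, llr P Pstar x ∂P := my_integral_llr_nonneg hP_ac_star hllrPstar_int
    rw [integral_neg] at hkey
    have hineq : - ∫ x, c x ∂Pstar - Real.log Z + ∫ x, c x ∂Pstar
        ≤ ∫ x, c x ∂P + ∫ x, llr P P'i x ∂P := by linarith [hnn, hkey.symm.le]
    rw [hrisk_star, hrisk_P, hKL_star, hKL_P, ← EReal.coe_add, ← EReal.coe_add]
    exact_mod_cast by linarith
  · rw [hrisk_star, hKL_star, KL, if_neg hPc, EReal.coe_add_top, ← EReal.coe_add]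
    exact le_top
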